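/- In the network setup, suppose (φ_h)_{h∈H} is a traveling wave of the network problem at profile level. Then the following three statements are equivalent: (i) there exists j ∈ J with c_j = 0; (ii) c_i = 0 for all i ∈ I; (iii) c_j = 0 for all j ∈ J. Consequently, either c_h = 0 for every h ∈ H (the wave is stationary) or c_j ≠ 0 for every j ∈ J and c_i ≠ 0 for some i ∈ I. -/
import Mathlib


open Set Filter MeasureTheory
open scoped Topology Classical

/-- Assumption (f): `f ∈ C¹([0,1];ℝ)` is nonnegative, strictly concave, `f 0 = f 1 = 0`. -/
def FluxAssumption (f : ℝ → ℝ) : Prop :=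
  ContDiffOn ℝ 1 f (Icc 0 1) ∧ StrictConcaveOn ℝ (Icc 0 1) f ∧
  (∀ x ∈ Icc (0:ℝ) 1, 0 ≤ f x) ∧ f 0 = 0 ∧ f 1 = 0

/-- Assumption (D): `D ∈ C¹([0,1];ℝ)` is nonnegative and positive on `(0,1)`. -/
def DiffAssumption (D : ℝ → ℝ) : Prop :=
  ContDiffOn ℝ 1 D (Icc 0 1) ∧ (∀ x ∈ Icc (0:ℝ) 1, 0 ≤ D x) ∧
  (∀ x ∈ Ioo (0:ℝ) 1, 0 < D x)

/-- The wave speed `c = (f(ℓ⁺) - f(ℓ⁻))/(ℓ⁺ - ℓ⁻)`. -/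
noncomputable def waveSpeed (f : ℝ → ℝ) (a b : ℝ) : ℝ := (f b - f a) / (b - a)

/-- The reduced flux `g(ρ) = f(ρ) - c ρ`. -/
noncomputable def redFlux (f : ℝ → ℝ) (a b ρ : ℝ) : ℝ := f ρ - waveSpeed f a b * ρ

/-- A profile for data `f, D, ℓ⁻ = a, ℓ⁺ = b`: continuous, non-decreasing, with values in
`[a,b]`, limits `a` at `-∞` and `b` at `+∞`, `C²` on `I = {ξ | a < φ ξ < b}` with positive
derivative there, satisfying `D(φ) φ' = g(φ) - g(a)` on `I`. -/
def IsProfile (f D : ℝ → ℝ) (a b : ℝ) (φ : ℝ → ℝ) : Prop :=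
  Continuous φ ∧ Monotone φ ∧ (∀ ξ, φ ξ ∈ Icc a b) ∧
  Tendsto φ atBot (𝓝 a) ∧ Tendsto φ atTop (𝓝 b) ∧
  ContDiffOn ℝ 2 φ {ξ | a < φ ξ ∧ φ ξ < b} ∧
  ∀ ξ, a < φ ξ → φ ξ < b →
    0 < deriv φ ξ ∧ D (φ ξ) * deriv φ ξ = redFlux f a b (φ ξ) - redFlux f a b a

/-- Speed of road `h` given end–state functions. -/
noncomputable def spd {H : Type*} (f : H → ℝ → ℝ) (lm lp : H → ℝ) (h : H) : ℝ :=
  waveSpeed (f h) (lm h) (lp h)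

/-- Reduced flux of road `h` given end–state functions. -/
noncomputable def gred {H : Type*} (f : H → ℝ → ℝ) (lm lp : H → ℝ) (h : H) (ρ : ℝ) : ℝ :=
  redFlux (f h) (lm h) (lp h) ρ

/-- The network setup: flux/diffusivity assumptions on each road, and coefficients
`α i j ∈ (0,1]` with unit row sums. -/
def NetworkSetup {m n : ℕ} (f D : Fin m ⊕ Fin n → ℝ → ℝ) (α : Fin m → Fin n → ℝ) : Prop :=
  (∀ h, FluxAssumption (f h)) ∧ (∀ h, DiffAssumption (D h)) ∧
  (∀ i j, α i j ∈ Ioc (0:ℝ) 1) ∧ (∀ i, ∑ j, α i j = 1)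

/-- Admissible end states: `0 ≤ ℓ_h⁻ < ℓ_h⁺ ≤ 1` for every road. -/
def EndStates {H : Type*} (lm lp : H → ℝ) : Prop :=
  ∀ h, 0 ≤ lm h ∧ lm h < lp h ∧ lp h ≤ 1

/-- The coupling condition (Tool):
`c_j φ_j(c_j t) + g_j(ℓ_j⁻) = ∑_i α_{i,j} (c_i φ_i(c_i t) + g_i(ℓ_i⁻))` for all `t, j`. -/
def Tool {m n : ℕ} (f : Fin m ⊕ Fin n → ℝ → ℝ) (α : Fin m → Fin n → ℝ)
    (lm lp : Fin m ⊕ Fin n → ℝ) (φ : Fin m ⊕ Fin n → ℝ → ℝ) : Prop :=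
  ∀ t : ℝ, ∀ j : Fin n,
    spd f lm lp (Sum.inr j) * φ (Sum.inr j) (spd f lm lp (Sum.inr j) * t)
      + gred f lm lp (Sum.inr j) (lm (Sum.inr j))
    = ∑ i : Fin m, α i j *
        (spd f lm lp (Sum.inl i) * φ (Sum.inl i) (spd f lm lp (Sum.inl i) * t)
          + gred f lm lp (Sum.inl i) (lm (Sum.inl i)))

/-- A traveling wave of the network problem at profile level: a family of profiles
satisfying the coupling condition (Tool). -/
def IsTravelingWave {m n : ℕ} (f D : Fin m ⊕ Fin n → ℝ → ℝ) (α : Fin m → Fin n → ℝ)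
    (lm lp : Fin m ⊕ Fin n → ℝ) (φ : Fin m ⊕ Fin n → ℝ → ℝ) : Prop :=
  (∀ h, IsProfile (f h) (D h) (lm h) (lp h) (φ h)) ∧ Tool f α lm lp φ

/-- `L_{i,j}⁻`: `ℓ_i⁻` if `c_i c_j ≥ 0`, and `ℓ_i⁺` otherwise. -/
noncomputable def Lminus {m n : ℕ} (f : Fin m ⊕ Fin n → ℝ → ℝ)
    (lm lp : Fin m ⊕ Fin n → ℝ) (i : Fin m) (j : Fin n) : ℝ :=
  if 0 ≤ spd f lm lp (Sum.inl i) * spd f lm lp (Sum.inr j) then lm (Sum.inl i)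
  else lp (Sum.inl i)

/-- `L_{i,j}⁺`: `ℓ_i⁺` if `c_i c_j ≥ 0`, and `ℓ_i⁻` otherwise. -/
noncomputable def Lplus {m n : ℕ} (f : Fin m ⊕ Fin n → ℝ → ℝ)
    (lm lp : Fin m ⊕ Fin n → ℝ) (i : Fin m) (j : Fin n) : ℝ :=
  if 0 ≤ spd f lm lp (Sum.inl i) * spd f lm lp (Sum.inr j) then lp (Sum.inl i)
  else lm (Sum.inl i)

/-- `k_j = ∑_{i ∈ I₀ᶜ} A_{i,j} L_{i,j}⁻ - ℓ_j⁻` with `A_{i,j} = α_{i,j} c_i / c_j`. -/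
noncomputable def kconst {m n : ℕ} (f : Fin m ⊕ Fin n → ℝ → ℝ) (α : Fin m → Fin n → ℝ)
    (lm lp : Fin m ⊕ Fin n → ℝ) (j : Fin n) : ℝ :=
  (∑ i ∈ Finset.univ.filter (fun i : Fin m => spd f lm lp (Sum.inl i) ≠ 0),
      (α i j * (spd f lm lp (Sum.inl i) / spd f lm lp (Sum.inr j))) * Lminus f lm lp i j)
    - lm (Sum.inr j)

/-- If `c * φ (c * t)` is constant in `t` and `φ` has distinct limits at `±∞`, then `c = 0`. -/
lemma aux_const_zero (φ : ℝ → ℝ) (a b c : ℝ) (hab : a < b)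
    (ha : Tendsto φ atBot (𝓝 a)) (hb : Tendsto φ atTop (𝓝 b))
    (hc : ∀ t, c * φ (c * t) = c * φ 0) : c = 0 := by
  by_contra hne
  have key : ∀ s, φ s = φ 0 := fun s => by
    have h := hc (s / c)
    rw [mul_div_cancel₀ _ hne] at h
    exact mul_left_cancel₀ hne h
  have h1 : a = φ 0 := tendsto_nhds_unique (ha.congr key) tendsto_const_nhds
  have h2 : b = φ 0 := tendsto_nhds_unique (hb.congr key) tendsto_const_nhds
  linarith

/-- If a positive combination of monotone functions is constant, each is constant. -/
lemma aux_sum_mono_const {m : ℕ} (α : Fin m → ℝ) (hα : ∀ i, 0 < α i) (u : Fin m → ℝ → ℝ)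
    (hu : ∀ i, Monotone (u i)) (hconst : ∀ t₁ t₂ : ℝ, ∑ i, α i * u i t₁ = ∑ i, α i * u i t₂)
    (i : Fin m) (t₁ t₂ : ℝ) : u i t₁ = u i t₂ := by
  have main : ∀ s₁ s₂ : ℝ, s₁ ≤ s₂ → u i s₁ = u i s₂ := by
    intro s₁ s₂ hle
    have h0 : ∑ k, α k * (u k s₂ - u k s₁) = 0 := by
      simp only [mul_sub, Finset.sum_sub_distrib]
      rw [hconst s₁ s₂, sub_self]
    have hz := (Finset.sum_eq_zero_iff_of_nonneg (fun k _ =>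
      mul_nonneg (hα k).le (sub_nonneg.2 (hu k hle)))).mp h0 i (Finset.mem_univ i)
    have := mul_eq_zero.mp hz
    rcases this with h | h
    · exact absurd h (hα i).ne'
    · linarith
  rcases le_total t₁ t₂ with h | h
  · exact main t₁ t₂ h
  · exact (main t₂ t₁ h).symm

/-- Monotonicity of `t ↦ c * φ (c * t)` for monotone `φ`. -/
lemma aux_mono (φ : ℝ → ℝ) (hφ : Monotone φ) (c : ℝ) :
    Monotone (fun t => c * φ (c * t)) := by
  intro t₁ t₂ h
  rcases le_total 0 c with hc | hc
  · exact mul_le_mul_of_nonneg_left (hφ (mul_le_mul_of_nonneg_left h hc)) hc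
  · exact mul_le_mul_of_nonpos_left (hφ (mul_le_mul_of_nonpos_left h hc)) hc

/-- Either a traveling wave of the network problem is stationary (all speeds vanish), or
no outgoing speed vanishes and some incoming speed is nonzero. -/
theorem stmt8 (m n : ℕ) (hm : 0 < m) (hn : 0 < n)
    (f D : Fin m ⊕ Fin n → ℝ → ℝ) (α : Fin m → Fin n → ℝ)
    (hnet : NetworkSetup f D α)
    (lm lp : Fin m ⊕ Fin n → ℝ) (hends : EndStates lm lp)
    (φ : Fin m ⊕ Fin n → ℝ → ℝ)
    (hTW : IsTravelingWave f D α lm lp φ) :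
    ((∃ j : Fin n, spd f lm lp (Sum.inr j) = 0) ↔
      (∀ i : Fin m, spd f lm lp (Sum.inl i) = 0)) ∧
    ((∀ i : Fin m, spd f lm lp (Sum.inl i) = 0) ↔
      (∀ j : Fin n, spd f lm lp (Sum.inr j) = 0)) ∧
    ((∀ h, spd f lm lp h = 0) ∨
      ((∀ j : Fin n, spd f lm lp (Sum.inr j) ≠ 0) ∧
        ∃ i : Fin m, spd f lm lp (Sum.inl i) ≠ 0)) := by
  obtain ⟨hprof, htool⟩ := hTW
  set c : Fin m ⊕ Fin n → ℝ := spd f lm lp with hc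
  -- limits of profiles
  have hlim : ∀ h, Tendsto (φ h) atBot (𝓝 (lm h)) ∧ Tendsto (φ h) atTop (𝓝 (lp h)) :=
    fun h => ⟨(hprof h).2.2.2.1, (hprof h).2.2.2.2.1⟩
  have hmono : ∀ h, Monotone (φ h) := fun h => (hprof h).2.1
  have hab : ∀ h, lm h < lp h := fun h => (hends h).2.1
  -- key1 : some outgoing speed zero → all incoming speeds zero
  have key1 : (∃ j : Fin n, c (Sum.inr j) = 0) → ∀ i : Fin m, c (Sum.inl i) = 0 := by
    rintro ⟨j, hj⟩ i
    -- the sum over i is constant in t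
    have hconst : ∀ t₁ t₂ : ℝ,
        (∑ k : Fin m, α k j * (c (Sum.inl k) * φ (Sum.inl k) (c (Sum.inl k) * t₁)
            + gred f lm lp (Sum.inl k) (lm (Sum.inl k))))
        = ∑ k : Fin m, α k j * (c (Sum.inl k) * φ (Sum.inl k) (c (Sum.inl k) * t₂)
            + gred f lm lp (Sum.inl k) (lm (Sum.inl k))) := by
      intro t₁ t₂
      have h1 := htool t₁ j
      have h2 := htool t₂ j
      rw [← hc] at h1 h2
      rw [hj] at h1 h2
      simp only [zero_mul] at h1 h2
      rw [← h1, ← h2]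
    have huc := aux_sum_mono_const (fun k => α k j) (fun k => (hnet.2.2.1 k j).1)
      (fun k t => c (Sum.inl k) * φ (Sum.inl k) (c (Sum.inl k) * t)
        + gred f lm lp (Sum.inl k) (lm (Sum.inl k)))
      (fun k => (aux_mono _ (hmono (Sum.inl k)) _).add_const _) hconst i
    refine aux_const_zero (φ (Sum.inl i)) (lm (Sum.inl i)) (lp (Sum.inl i)) _
      (hab _) (hlim _).1 (hlim _).2 (fun t => ?_)
    have := huc t 0
    rw [mul_zero] at this
    linarith
  -- key2 : all incoming speeds zero → all outgoing speeds zero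
  have key2 : (∀ i : Fin m, c (Sum.inl i) = 0) → ∀ j : Fin n, c (Sum.inr j) = 0 := by
    intro hi j
    refine aux_const_zero (φ (Sum.inr j)) (lm (Sum.inr j)) (lp (Sum.inr j)) _
      (hab _) (hlim _).1 (hlim _).2 (fun t => ?_)
    have h1 := htool t j
    have h2 := htool 0 j
    rw [← hc] at h1 h2
    simp only [hi, zero_mul, zero_add] at h1 h2
    rw [mul_zero] at h2
    linarith
  obtain ⟨j₀⟩ : Nonempty (Fin n) := ⟨⟨0, hn⟩⟩
  refine ⟨⟨key1, fun h => ⟨j₀, key2 h j₀⟩⟩, ⟨key2, fun h => key1 ⟨j₀, h j₀⟩⟩, ?_⟩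
  by_cases hall : ∀ i : Fin m, c (Sum.inl i) = 0
  · left
    intro h
    cases h with
    | inl i => exact hall i
    | inr j => exact key2 hall j
  · right
    push_neg at hall
    refine ⟨fun j hj => ?_, hall⟩
    obtain ⟨i, hi⟩ := hall
    exact hi (key1 ⟨j, hj⟩ i)
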